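/- Let P be a Poisson n-Lie algebra. Define the lower central series P¹ = P, P^{k+1} = [P^k, P, P, …, P] + P^k · P. Then for all i, j ≥ 1, P^i · P^j ⊆ P^{i+j}. -/

import Mathlib

/-- Span of brackets with the first entry running over `S`. -/
def bk1 (F : Type*) {P : Type*} [Field F] [CommRing P] [Algebra F P] {m : ℕ}
    (br : (Fin (m + 2) → P) → P) (S : Submodule F P) : Submodule F P :=
  Submodule.span F {z | ∃ x : Fin (m + 2) → P, x 0 ∈ S ∧ z = br x}

/-- Lower central series of a Poisson `n`-Lie algebra (0-indexed):
`lcs 0 = P¹ = P`, `lcs k = P^{k+1} = [P^k, P, …, P] + P^k · P`. -/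
def lcs (F : Type*) {P : Type*} [Field F] [CommRing P] [Algebra F P] {m : ℕ}
    (br : (Fin (m + 2) → P) → P) : ℕ → Submodule F P
  | 0 => ⊤
  | k + 1 => bk1 F br (lcs F br k) ⊔ lcs F br k * ⊤

/-- In a Poisson `n`-Lie algebra, `P^i · P^j ⊆ P^{i+j}` (0-indexed:
`lcs i * lcs j ≤ lcs (i + j + 1)`). -/
theorem lcs_mul_lcs_le
    (F P : Type*) [Field F] [CommRing P] [Algebra F P] (m : ℕ)
    (br : AlternatingMap F P P (Fin (m + 2)))
    (hFI : ∀ (x : Fin (m + 1) → P) (y : Fin (m + 2) → P),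
      br (Fin.snoc x (br y)) =
        ∑ i, br (Function.update y i (br (Fin.snoc x (y i)))))
    (hLeib : ∀ (u v : P) (x : Fin (m + 1) → P),
      br (Fin.cons (u * v) x) = u * br (Fin.cons v x) + v * br (Fin.cons u x))
    (i j : ℕ) :
    lcs F (⇑br) i * lcs F (⇑br) j ≤ lcs F (⇑br) (i + j + 1) := by
  induction i generalizing j with
  | zero =>
    rw [show (0 : ℕ) + j + 1 = j + 1 from by omega,
      show lcs F (⇑br) 0 = ⊤ from rfl, mul_comm,
      show lcs F (⇑br) (j + 1) = bk1 F (⇑br) (lcs F (⇑br) j) ⊔ lcs F (⇑br) j * ⊤ from rfl]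
    exact le_sup_right
  | succ i IH =>
    rw [show i + 1 + j + 1 = (i + j + 1) + 1 from by omega,
      show lcs F (⇑br) (i + 1) = bk1 F (⇑br) (lcs F (⇑br) i) ⊔ lcs F (⇑br) i * ⊤ from rfl,
      Submodule.sup_mul]
    have hlcs : lcs F (⇑br) ((i + j + 1) + 1)
        = bk1 F (⇑br) (lcs F (⇑br) (i + j + 1)) ⊔ lcs F (⇑br) (i + j + 1) * ⊤ := rfl
    apply sup_le
    · rw [Submodule.mul_le]
      intro z hz b hb
      induction hz using Submodule.span_induction with
      | mem z hmem =>
        obtain ⟨x, hx0, rfl⟩ := hmem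
        set a := x 0 with ha
        set t := Fin.tail x with ht
        have hx : x = Fin.cons a t := (Fin.cons_self_tail x).symm
        have hL := hLeib a b t
        have key : br x * b = br (Fin.cons (a * b) t) - a * br (Fin.cons b t) := by
          rw [hx, hL]; ring
        rw [key]
        apply sub_mem
        · rw [hlcs]
          refine le_sup_left (α := Submodule F P) ?_
          apply Submodule.subset_span
          exact ⟨Fin.cons (a * b) t, by
            simpa using IH j (Submodule.mul_mem_mul hx0 hb), rfl⟩
        · have hbr : br (Fin.cons b t) ∈ lcs F (⇑br) (j + 1) := by
            rw [show lcs F (⇑br) (j + 1)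
                = bk1 F (⇑br) (lcs F (⇑br) j) ⊔ lcs F (⇑br) j * ⊤ from rfl]
            refine le_sup_left (α := Submodule F P) ?_
            exact Submodule.subset_span ⟨Fin.cons b t, by simpa using hb, rfl⟩
          have := IH (j + 1) (Submodule.mul_mem_mul hx0 hbr)
          rwa [show i + (j + 1) + 1 = (i + j + 1) + 1 from by omega] at this
      | zero => simpa using Submodule.zero_mem _
      | add x y _ _ hx hy =>
        rw [add_mul]; exact add_mem hx hy
      | smul c x _ hx =>
        rw [smul_mul_assoc]; exact Submodule.smul_mem _ _ hx
    · calc lcs F (⇑br) i * ⊤ * lcs F (⇑br) j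
          = lcs F (⇑br) i * lcs F (⇑br) j * ⊤ := by ring
        _ ≤ lcs F (⇑br) (i + j + 1) * ⊤ := mul_le_mul_left (IH j) _
        _ ≤ _ := by rw [hlcs]; exact le_sup_right
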